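/- The Hermitian curve Y^q Z + Y Z^q = X^{q+1} in the projective plane PG(2, q^2) has exactly q^3 + 1 points rational over F_{q^2}: the point (0:1:0) and q^3 affine points. -/

import Mathlib

open Finset in
lemma root_filter_card_le (q : ℕ) (hq : 2 ≤ q) (F : Type) [Field F] [Fintype F]
    [DecidableEq F] (a : F) :
    (Finset.univ.filter fun y : F => y^q + a*y = 0).card ≤ q := by
  classical
  set f : Polynomial F := Polynomial.X^q + Polynomial.C a * Polynomial.X with hf
  have hf0 : f ≠ 0 := by
    intro h
    have hc : f.coeff q = 1 := by
      simp only [hf, Polynomial.coeff_add, Polynomial.coeff_X_pow, if_pos rfl,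
        Polynomial.coeff_C_mul, Polynomial.coeff_X]
      rw [if_neg (by omega : ¬ 1 = q), mul_zero, add_zero]
      simp
    rw [h] at hc; simp at hc
  have hsub : (Finset.univ.filter fun y : F => y^q + a*y = 0) ⊆ f.roots.toFinset := by
    intro y hy
    simp only [Finset.mem_filter, Finset.mem_univ, true_and] at hy
    rw [Multiset.mem_toFinset, Polynomial.mem_roots hf0]
    simp [Polynomial.IsRoot, hf, hy]
  calc (Finset.univ.filter fun y : F => y^q + a*y = 0).card ≤ f.roots.toFinset.card :=
        Finset.card_le_card hsub
    _ ≤ Multiset.card f.roots := Multiset.toFinset_card_le _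
    _ ≤ f.natDegree := Polynomial.card_roots' f
    _ ≤ q := by
        apply le_trans (Polynomial.natDegree_add_le _ _)
        simp only [Polynomial.natDegree_X_pow, max_le_iff, le_refl, true_and]
        exact le_trans (Polynomial.natDegree_C_mul_le _ _) (by simp; omega)

open Finset in
lemma hermitian_affine_count (q p m : ℕ) (hp : p.Prime) (hm : 0 < m) (hqpm : q = p ^ m)
    (F : Type) [Field F] [Fintype F] [DecidableEq F] (hcard : Fintype.card F = q ^ 2) :
    (Finset.univ.filter fun v : F × F => v.2 ^ q + v.2 = v.1 ^ (q + 1)).card = q ^ 3 := by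
  classical
  have hq2 : 2 ≤ q := by
    rw [hqpm]; exact le_trans hp.two_le (Nat.le_self_pow (by omega) p)
  have hq0 : 0 < q := by omega
  haveI hchar : CharP F p := by
    haveI : CharP F (ringChar F) := ringChar.charP F
    obtain ⟨n, hrp, hcardr⟩ := FiniteField.card F (ringChar F)
    have hd : ringChar F ∣ p ^ (2 * m) := by
      have h2 : p ^ (2 * m) = Fintype.card F := by
        rw [hcard, hqpm, ← pow_mul, mul_comm]
      rw [h2, hcardr]
      exact dvd_pow_self _ n.pos.ne'
    have : ringChar F = p := (Nat.prime_dvd_prime_iff_eq hrp hp).mp (hrp.dvd_of_dvd_pow hd)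
    rwa [this] at ‹CharP F (ringChar F)›
  haveI : Fact p.Prime := ⟨hp⟩
  have frob : ∀ a b : F, (a + b) ^ q = a ^ q + b ^ q := by
    intro a b; rw [hqpm]; exact add_pow_char_pow a b p m
  have frobsub : ∀ a b : F, (a - b) ^ q = a ^ q - b ^ q := by
    intro a b; rw [hqpm]; exact sub_pow_char_pow a b m
  have hpowcard : ∀ a : F, a ^ q ^ 2 = a := by
    intro a; rw [← hcard]; exact FiniteField.pow_card a
  have hTfix : ∀ a : F, (a ^ q + a) ^ q = a ^ q + a := by
    intro a
    rw [frob, ← pow_mul, ← sq, hpowcard, add_comm]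
  have hNfix : ∀ a : F, (a ^ (q + 1)) ^ q = a ^ (q + 1) := by
    intro a
    rw [← pow_mul, add_mul, one_mul, ← sq, pow_add, hpowcard, ← pow_succ']
  set K : Finset F := Finset.univ.filter fun y : F => y ^ q + y = 0 with hKdef
  set Fix : Finset F := Finset.univ.filter fun c : F => c ^ q = c with hFixdef
  set Im : Finset F := Finset.univ.image fun y : F => y ^ q + y with hImdef
  have hKle : K.card ≤ q := by
    have := root_filter_card_le q hq2 F 1
    simpa [hKdef] using this
  have hFixle : Fix.card ≤ q := by
    have := root_filter_card_le q hq2 F (-1)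
    have he : (Finset.univ.filter fun y : F => y ^ q + (-1) * y = 0) = Fix := by
      apply Finset.filter_congr
      intro y _
      constructor
      · intro h; linear_combination h
      · intro h; linear_combination h
    rwa [he] at this
  have hImFix : Im ⊆ Fix := by
    intro c hc
    simp only [hImdef, Finset.mem_image] at hc
    obtain ⟨y, _, rfl⟩ := hc
    simp only [hFixdef, Finset.mem_filter, Finset.mem_univ, true_and]
    exact hTfix y
  have hfib : ∀ c ∈ Im, (Finset.univ.filter fun y : F => y ^ q + y = c).card = K.card := by
    intro c hc
    simp only [hImdef, Finset.mem_image] at hc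
    obtain ⟨y0, _, hy0⟩ := hc
    apply Finset.card_bij' (fun y _ => y - y0) (fun y _ => y + y0)
    · intro y hy
      simp only [Finset.mem_filter, Finset.mem_univ, true_and] at hy
      simp only [hKdef, Finset.mem_filter, Finset.mem_univ, true_and]
      rw [frobsub]
      linear_combination hy - hy0
    · intro y hy
      simp only [hKdef, Finset.mem_filter, Finset.mem_univ, true_and] at hy
      simp only [Finset.mem_filter, Finset.mem_univ, true_and]
      rw [frob]
      linear_combination hy + hy0
    · intros; ring
    · intros; ring
  have hsum : Fintype.card F = Im.card * K.card := by
    rw [← Finset.card_univ]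
    rw [Finset.card_eq_sum_card_fiberwise
      (f := fun y : F => y ^ q + y) (t := Im)
      (fun x _ => Finset.mem_image_of_mem _ (Finset.mem_univ x))]
    rw [Finset.sum_congr rfl hfib, Finset.sum_const, smul_eq_mul]
  have hImle : Im.card ≤ q := le_trans (Finset.card_le_card hImFix) hFixle
  have h1 : q * q = Im.card * K.card := by rw [← hsum, hcard, sq]
  have hKge : q ≤ K.card := by
    refine Nat.le_of_mul_le_mul_left ?_ hq0
    calc q * q = Im.card * K.card := h1
      _ ≤ q * K.card := Nat.mul_le_mul_right _ hImle
  have hKq : K.card = q := le_antisymm hKle hKge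
  have hImq : Im.card = q := by
    rw [hKq] at h1
    exact Nat.eq_of_mul_eq_mul_right hq0 h1.symm
  have hImEq : Im = Fix := Finset.eq_of_subset_of_card_le hImFix (by rw [hImq]; exact hFixle)
  have hfibFix : ∀ c : F, c ^ q = c →
      (Finset.univ.filter fun y : F => y ^ q + y = c).card = q := by
    intro c hc
    have hcIm : c ∈ Im := by
      rw [hImEq, hFixdef]
      simp only [Finset.mem_filter, Finset.mem_univ, true_and]
      exact hc
    rw [hfib c hcIm, hKq]
  rw [Finset.card_eq_sum_card_fiberwise
    (f := fun v : F × F => v.1) (t := (Finset.univ : Finset F))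
    (fun x _ => Finset.mem_univ _)]
  have hterm : ∀ x : F, ((Finset.univ.filter fun v : F × F => v.2 ^ q + v.2 = v.1 ^ (q + 1)).filter
      fun v => v.1 = x).card = q := by
    intro x
    have heq : ((Finset.univ.filter fun v : F × F => v.2 ^ q + v.2 = v.1 ^ (q + 1)).filter
        fun v => v.1 = x).card
        = (Finset.univ.filter fun y : F => y ^ q + y = x ^ (q + 1)).card := by
      refine Finset.card_bij' (fun v _ => v.2) (fun y _ => (x, y)) ?_ ?_ ?_ ?_
      · intro v hv
        simp only [Finset.mem_filter, Finset.mem_univ, true_and] at hv ⊢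
        rw [← hv.2]; exact hv.1
      · intro y hy
        simp only [Finset.mem_filter, Finset.mem_univ, true_and] at hy ⊢
        exact ⟨hy, trivial⟩
      · intro v hv
        simp only [Finset.mem_filter, Finset.mem_univ, true_and] at hv
        exact Prod.ext hv.2.symm rfl
      · intros; rfl
    rw [heq, hfibFix (x ^ (q + 1)) (hNfix x)]
  rw [Finset.sum_congr rfl fun x _ => hterm x, Finset.sum_const, smul_eq_mul,
    Finset.card_univ, hcard]
  ring

open scoped LinearAlgebra.Projectivization

theorem hermitian_curve_point_count
    (q : ℕ) (hq : ∃ p m : ℕ, p.Prime ∧ 0 < m ∧ q = p ^ m)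
    (F : Type) [Field F] [Fintype F] (hcard : Fintype.card F = q ^ 2) :
    Set.ncard {P : ℙ F (Fin 3 → F) |
        (P.rep 1) ^ q * P.rep 2 + P.rep 1 * (P.rep 2) ^ q = (P.rep 0) ^ (q + 1)}
      = q ^ 3 + 1 := by
  classical
  obtain ⟨p, m, hp, hm, hqpm⟩ := hq
  have hq2 : 2 ≤ q := by
    rw [hqpm]; exact le_trans hp.two_le (Nat.le_self_pow hm.ne' p)
  haveI : Finite (ℙ F (Fin 3 → F)) := Quotient.finite _
  set S : Set (ℙ F (Fin 3 → F)) := {P : ℙ F (Fin 3 → F) |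
      (P.rep 1) ^ q * P.rep 2 + P.rep 1 * (P.rep 2) ^ q = (P.rep 0) ^ (q + 1)} with hSdef
  have hmem : ∀ (v : Fin 3 → F) (hv : v ≠ 0),
      Projectivization.mk F v hv ∈ S ↔ v 1 ^ q * v 2 + v 1 * v 2 ^ q = v 0 ^ (q + 1) := by
    intro v hv
    obtain ⟨a, ha⟩ := Projectivization.exists_smul_eq_mk_rep F v hv
    have h1 : ∀ i, (Projectivization.mk F v hv).rep i = (a : F) * v i := by
      intro i; rw [← ha]; rfl
    simp only [hSdef, Set.mem_setOf_eq, h1]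
    rw [show ((a:F) * v 1) ^ q * ((a:F) * v 2) + ((a:F) * v 1) * ((a:F) * v 2) ^ q
        = (a:F) ^ (q+1) * (v 1 ^ q * v 2 + v 1 * v 2 ^ q) from by ring,
      show ((a:F) * v 0) ^ (q+1) = (a:F) ^ (q+1) * v 0 ^ (q+1) from by ring,
      mul_right_inj' (pow_ne_zero _ a.ne_zero)]
  have hinfne : (![0,1,0] : Fin 3 → F) ≠ 0 := by
    intro h; simpa using congrFun h 1
  set Pinf : ℙ F (Fin 3 → F) := Projectivization.mk F ![0,1,0] hinfne with hPinfdef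
  have hgne : ∀ w : F × F, (![w.1, w.2, 1] : Fin 3 → F) ≠ 0 := by
    intro w h; simpa using congrFun h 2
  set g : F × F → ℙ F (Fin 3 → F) := fun w => Projectivization.mk F ![w.1, w.2, 1] (hgne w)
    with hgdef
  set A : Set (F × F) := {w : F × F | w.2 ^ q + w.2 = w.1 ^ (q + 1)} with hAdef
  have hginj : Function.Injective g := by
    intro w w' h
    rw [hgdef, Projectivization.mk_eq_mk_iff] at h
    obtain ⟨a, ha⟩ := h
    have h2 := congrFun ha 2
    have h0 := congrFun ha 0
    have h1 := congrFun ha 1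
    simp only [Pi.smul_apply, Units.smul_def, smul_eq_mul, Matrix.cons_val_two,
      Matrix.cons_val_zero, Matrix.cons_val_one, Matrix.head_cons, Matrix.tail_cons,
      mul_one] at h2 h0 h1
    rw [h2] at h0 h1
    rw [one_mul] at h0 h1
    exact Prod.ext h0.symm h1.symm
  have hnotmem : Pinf ∉ g '' A := by
    rintro ⟨w, -, hw⟩
    rw [hgdef, hPinfdef, Projectivization.mk_eq_mk_iff] at hw
    obtain ⟨a, ha⟩ := hw
    have h2 := congrFun ha 2
    simp at h2
  have key : S = insert Pinf (g '' A) := by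
    ext P
    constructor
    · intro hP
      have hE : P.rep 1 ^ q * P.rep 2 + P.rep 1 * P.rep 2 ^ q = P.rep 0 ^ (q+1) := hP
      rw [Set.mem_insert_iff]
      by_cases h2 : P.rep 2 = 0
      · left
        have h0 : P.rep 0 = 0 := by
          rw [h2, mul_zero, zero_pow (by omega : q ≠ 0), mul_zero, add_zero] at hE
          exact (pow_eq_zero_iff (by omega : q + 1 ≠ 0)).mp hE.symm
        have h1 : P.rep 1 ≠ 0 := by
          intro h1
          apply P.rep_nonzero
          funext i; fin_cases i <;> assumption
        rw [hPinfdef]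
        conv_lhs => rw [← P.mk_rep]
        rw [Projectivization.mk_eq_mk_iff]
        refine ⟨Units.mk0 (P.rep 1) h1, ?_⟩
        funext i
        fin_cases i <;>
          simp [Units.smul_def, h0, h2]
      · right
        refine ⟨(P.rep 0 / P.rep 2, P.rep 1 / P.rep 2), ?_, ?_⟩
        · rw [hAdef]
          show (P.rep 1 / P.rep 2) ^ q + P.rep 1 / P.rep 2 = (P.rep 0 / P.rep 2) ^ (q+1)
          rw [div_pow, div_pow, ← hE, div_add_div _ _ (pow_ne_zero q h2) h2, ← pow_succ]
          ring_nf
        · rw [hgdef]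
          conv_rhs => rw [← P.mk_rep]
          rw [Projectivization.mk_eq_mk_iff]
          refine ⟨(Units.mk0 (P.rep 2) h2)⁻¹, ?_⟩
          funext i
          fin_cases i <;>
            simp [Units.smul_def, div_eq_inv_mul, inv_mul_cancel₀ h2]
    · intro h
      rcases Set.mem_insert_iff.mp h with rfl | ⟨w, hw, rfl⟩
      · show Projectivization.mk F ![0,1,0] hinfne ∈ S
        exact (hmem _ _).mpr (by
          simp [zero_pow (by omega : q ≠ 0), zero_pow (by omega : q + 1 ≠ 0)])
      · show Projectivization.mk F ![w.1, w.2, 1] (hgne w) ∈ S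
        exact (hmem _ _).mpr (by have hw' : w.2 ^ q + w.2 = w.1 ^ (q + 1) := hw; simpa using hw')
  rw [key, Set.ncard_insert_of_notMem hnotmem (Set.toFinite _),
    Set.ncard_image_of_injective _ hginj]
  have hA3 : A.ncard = q ^ 3 := by
    have hc := hermitian_affine_count q p m hp hm hqpm F hcard
    rw [Set.ncard_eq_toFinset_card' A]
    have hts : A.toFinset = Finset.univ.filter fun v : F × F => v.2 ^ q + v.2 = v.1 ^ (q+1) := by
      ext v
      simp only [Set.mem_toFinset, Finset.mem_filter, Finset.mem_univ, true_and]
      exact Iff.rfl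
    rw [hts]
    exact hc
  rw [hA3]
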